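/- Let A_0 = B (weighted forward shift with weights β_n ≠ 0, |β_n|^{1/n} → 0) and A_1 = I on ℓ². Define the relative ascent α(B:I) as the least m with ker(B) ∩ [B^m(ℓ²)]^a = {0} (∞ if none) and relative descent δ(B:I) as the least m with [B(ℓ²)]^a + ker(B^m) = ℓ². Then δ(B:I) = 0 while α(B:I) = ∞. -/

import Mathlib

theorem statement19
    (β : ℕ → ℂ) (hβ0 : ∀ n, β n ≠ 0)
    (hβ : Filter.Tendsto (fun n : ℕ => ‖β n‖ ^ (1 / (n : ℝ)))
      Filter.atTop (nhds 0))
    (B : lp (fun _ : ℕ => ℂ) 2 →L[ℂ] lp (fun _ : ℕ => ℂ) 2)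
    (hB : ∀ (x : lp (fun _ : ℕ => ℂ) 2) (i : ℕ), (B x) i = β i * x (i + 1)) :
    -- descent is 0: the defining condition already holds at m = 0
    ((LinearMap.range (B : lp (fun _ : ℕ => ℂ) 2 →ₗ[ℂ] lp (fun _ : ℕ => ℂ) 2)).topologicalClosure ⊔ LinearMap.ker ((B ^ (0 : ℕ) : lp (fun _ : ℕ => ℂ) 2 →L[ℂ] lp (fun _ : ℕ => ℂ) 2) : lp (fun _ : ℕ => ℂ) 2 →ₗ[ℂ] lp (fun _ : ℕ => ℂ) 2) = ⊤) ∧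
    -- ascent is ∞: the defining condition fails for every m
    (∀ m : ℕ, LinearMap.ker (B : lp (fun _ : ℕ => ℂ) 2 →ₗ[ℂ] lp (fun _ : ℕ => ℂ) 2) ⊓ (LinearMap.range ((B ^ m : lp (fun _ : ℕ => ℂ) 2 →L[ℂ] lp (fun _ : ℕ => ℂ) 2) : lp (fun _ : ℕ => ℂ) 2 →ₗ[ℂ] lp (fun _ : ℕ => ℂ) 2)).topologicalClosure ≠ ⊥) := by
  have hsingle : ∀ (k : ℕ) (c : ℂ),
      B (lp.single 2 (k + 1) c) = lp.single 2 k (β k * c) := by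
    intro k c
    apply lp.ext
    funext i
    rw [hB]
    rcases eq_or_ne i k with rfl | h
    · rw [lp.single_apply_self, lp.single_apply_self]
    · rw [lp.single_apply_ne _ _ _ (fun hh => h (Nat.succ_injective hh)),
        lp.single_apply_ne _ _ _ h, mul_zero]
  have hpow : ∀ (m : ℕ) (c : ℂ),
      (B ^ m) (lp.single 2 m c) = lp.single 2 0 ((∏ j ∈ Finset.range m, β j) * c) := by
    intro m
    induction m with
    | zero => intro c; simp
    | succ m ih =>
      intro c
      rw [pow_succ, ContinuousLinearMap.mul_apply, hsingle, ih, Finset.prod_range_succ,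
        mul_assoc]
  constructor
  · -- density of range B
    have hdense : (LinearMap.range (B : lp (fun _ : ℕ => ℂ) 2 →ₗ[ℂ] lp (fun _ : ℕ => ℂ) 2)).topologicalClosure = ⊤ := by
      rw [Submodule.topologicalClosure_eq_top_iff, Submodule.eq_bot_iff]
      intro y hy
      apply lp.ext
      funext i
      have hmem : B (lp.single 2 (i + 1) (1 : ℂ)) ∈ LinearMap.range (B : lp (fun _ : ℕ => ℂ) 2 →ₗ[ℂ] lp (fun _ : ℕ => ℂ) 2) := ⟨_, rfl⟩
      have h0 := (Submodule.mem_orthogonal _ y).mp hy _ hmem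
      rw [hsingle, mul_one, lp.inner_single_left] at h0
      have : (starRingEnd ℂ) (β i) * y i = 0 := by rw [RCLike.inner_apply'] at h0; exact h0
      have hne : (starRingEnd ℂ) (β i) ≠ 0 := by
        simpa using hβ0 i
      have : y i = 0 := by
        rcases mul_eq_zero.mp this with h | h
        · exact absurd h hne
        · exact h
      simpa using this
    rw [hdense, top_sup_eq]
  · intro m h
    set c : ℂ := (∏ j ∈ Finset.range m, β j)⁻¹ with hc
    have hprod : (∏ j ∈ Finset.range m, β j) ≠ 0 :=
      Finset.prod_ne_zero_iff.mpr fun j _ => hβ0 j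
    have he : lp.single 2 0 (1 : ℂ) ∈
        LinearMap.ker (B : lp (fun _ : ℕ => ℂ) 2 →ₗ[ℂ] lp (fun _ : ℕ => ℂ) 2) ⊓ (LinearMap.range ((B ^ m : lp (fun _ : ℕ => ℂ) 2 →L[ℂ] lp (fun _ : ℕ => ℂ) 2) : lp (fun _ : ℕ => ℂ) 2 →ₗ[ℂ] lp (fun _ : ℕ => ℂ) 2)).topologicalClosure := by
      constructor
      · show B _ = 0
        apply lp.ext
        funext i
        rw [hB, lp.single_apply_ne _ _ _ (Nat.succ_ne_zero i), mul_zero]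
        rfl
      · apply Submodule.le_topologicalClosure
        refine ⟨lp.single 2 m c, ?_⟩
        rw [ContinuousLinearMap.coe_coe, hpow, hc, mul_inv_cancel₀ hprod]
    rw [h, Submodule.mem_bot] at he
    have h1 := congrArg (fun f : lp (fun _ : ℕ => ℂ) 2 => (f : ∀ _ : ℕ, ℂ) 0) he
    simp [lp.single_apply_self] at h1
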